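/- arXiv:1211.5762 — 6 statements merged into one kernel-verified Lean document; each statement's English description precedes it below -/
import Mathlib

section
/- Let F : 𝒮 → 𝒯 be a map of algebraic theories and let F* : Alg(𝒯) → Alg(𝒮) be the functor that equips a 𝒯-algebra with the 𝒮-actions obtained by composing with F. If F* is an equivalence of categories, then every component F_n : 𝒮(n) → 𝒯(n) is a bijection, i.e. F is an isomorphism of algebraic theories. -/
open CategoryTheory Limits

/-- An algebraic theory (abstract clone / cartesian operad): sets of `n`-ary
operations with projections (variables) and substitution. Renaming along
`f : Fin n → Fin m` is derived as substitution along projections. -/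
structure AlgTheory where
  carrier : ℕ → Type
  pr : ∀ {n : ℕ}, Fin n → carrier n
  subst : ∀ {n m : ℕ}, carrier n → (Fin n → carrier m) → carrier m
  pr_subst : ∀ {n m : ℕ} (i : Fin n) (s : Fin n → carrier m), subst (pr i) s = s i
  subst_pr : ∀ {n : ℕ} (t : carrier n), subst t pr = t
  subst_assoc : ∀ {n m k : ℕ} (t : carrier n) (s : Fin n → carrier m) (r : Fin m → carrier k),
    subst (subst t s) r = subst t fun i => subst (s i) r

/-- Renaming (the functorial action on `Fin n`), derived from substitution. -/
def AlgTheory.rename (T : AlgTheory) {n m : ℕ} (f : Fin n → Fin m) (t : T.carrier n) :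
    T.carrier m :=
  T.subst t fun i => T.pr (f i)
/-- An algebra for an algebraic theory `T`: a set with an associative unital
action of `T`. -/
structure ThAlgebra (T : AlgTheory) where
  carrier : Type
  act : ∀ {n : ℕ}, T.carrier n → (Fin n → carrier) → carrier
  act_pr : ∀ {n : ℕ} (i : Fin n) (a : Fin n → carrier), act (T.pr i) a = a i
  act_subst : ∀ {n m : ℕ} (t : T.carrier n) (s : Fin n → T.carrier m) (a : Fin m → carrier),
    act (T.subst t s) a = act t fun i => act (s i) a

/-- Homomorphisms of `T`-algebras. -/
structure ThAlgebraHom {T : AlgTheory} (A B : ThAlgebra T) where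
  toFun : A.carrier → B.carrier
  map_act : ∀ {n : ℕ} (t : T.carrier n) (a : Fin n → A.carrier),
    toFun (A.act t a) = B.act t fun i => toFun (a i)

/-- Composition of algebra homomorphisms (diagrammatic order). -/
def ThAlgebraHom.comp {T : AlgTheory} {A B C : ThAlgebra T}
    (f : ThAlgebraHom A B) (g : ThAlgebraHom B C) : ThAlgebraHom A C where
  toFun a := g.toFun (f.toFun a)
  map_act t a := by show g.toFun (f.toFun _) = _; rw [f.map_act, g.map_act]

/-- `T.carrier n` is itself a `T`-algebra via substitution; it is the free
algebra on `n` generators (the projections). -/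
def AlgTheory.freeAlg (T : AlgTheory) (n : ℕ) : ThAlgebra T where
  carrier := T.carrier n
  act t s := T.subst t s
  act_pr i s := T.pr_subst i s
  act_subst t s a := T.subst_assoc t s a

/-- Renaming gives an algebra homomorphism between free algebras. -/
def AlgTheory.renameHom (T : AlgTheory) {n m : ℕ} (f : Fin n → Fin m) :
    ThAlgebraHom (T.freeAlg n) (T.freeAlg m) where
  toFun := T.rename f
  map_act t a := T.subst_assoc t a _
/-- The category `Alg(T)` of `T`-algebras. -/
instance algebraCategory (T : AlgTheory) : CategoryTheory.Category (ThAlgebra T) where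
  Hom A B := ThAlgebraHom A B
  id _ := { toFun := fun a => a, map_act := fun _ _ => rfl }
  comp f g := f.comp g
  id_comp _ := rfl
  comp_id _ := rfl
  assoc _ _ _ := rfl
/-- A map of algebraic theories: a family of maps preserving projections and
substitution (hence also renaming). -/
structure TheoryHom (S T : AlgTheory) where
  app : ∀ {n : ℕ}, S.carrier n → T.carrier n
  map_pr : ∀ {n : ℕ} (i : Fin n), app (S.pr i) = T.pr i
  map_subst : ∀ {n m : ℕ} (t : S.carrier n) (s : Fin n → S.carrier m),
    app (S.subst t s) = T.subst (app t) fun i => app (s i)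

/-- The functor `F* : Alg(T) → Alg(S)` induced by a map of theories
`F : S → T`, equipping a `T`-algebra with the composite `S`-actions. -/
def TheoryHom.pullback {S T : AlgTheory} (F : TheoryHom S T) :
    ThAlgebra T ⥤ ThAlgebra S where
  obj A :=
    { carrier := A.carrier
      act := fun t a => A.act (F.app t) a
      act_pr := by
        intro n i a
        show A.act (F.app (S.pr i)) a = a i
        rw [F.map_pr, A.act_pr]
      act_subst := by
        intro n m t s a
        show A.act (F.app (S.subst t s)) a = A.act (F.app t) fun i => A.act (F.app (s i)) a
        rw [F.map_subst, A.act_subst] }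
  map f := { toFun := f.toFun, map_act := fun t a => f.map_act (F.app t) a }
  map_id _ := rfl
  map_comp _ _ := rfl

@[ext]
lemma ThAlgebraHom.ext' {T : AlgTheory} {A B : ThAlgebra T} {f g : ThAlgebraHom A B}
    (h : f.toFun = g.toFun) : f = g := by
  cases f; cases g; cases h; rfl

@[simp]
lemma comp_toFun {T : AlgTheory} {A B C : ThAlgebra T} (f : A ⟶ B) (g : B ⟶ C)
    (a : A.carrier) : (f ≫ g).toFun a = g.toFun (f.toFun a) := rfl

@[simp]
lemma id_toFun {T : AlgTheory} {A : ThAlgebra T} (a : A.carrier) :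
    ThAlgebraHom.toFun (𝟙 A) a = a := rfl

/-- The homomorphism out of the free algebra determined by a tuple. -/
def freeHom {T : AlgTheory} {n : ℕ} (B : ThAlgebra T) (b : Fin n → B.carrier) :
    ThAlgebraHom (T.freeAlg n) B where
  toFun t := B.act t b
  map_act t a := B.act_subst t a b

lemma freeHom_eq {T : AlgTheory} {n : ℕ} {B : ThAlgebra T}
    (h : ThAlgebraHom (T.freeAlg n) B) :
    h = freeHom B (fun i => h.toFun (T.pr i)) := by
  ext t
  show h.toFun t = B.act t _
  conv_lhs => rw [← T.subst_pr t]
  exact h.map_act t T.pr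

lemma free_bijective {T : AlgTheory} {n : ℕ} (B : ThAlgebra T) :
    Function.Bijective
      (fun h : ThAlgebraHom (T.freeAlg n) B => fun i => h.toFun (T.pr i)) := by
  constructor
  · intro h1 h2 e
    rw [freeHom_eq h1, freeHom_eq h2]
    simp only at e
    rw [e]
  · intro b
    exact ⟨freeHom B b, funext fun i => B.act_pr i b⟩

lemma freeHom_bijective {T : AlgTheory} {n : ℕ} (B : ThAlgebra T) :
    Function.Bijective (fun b : Fin n → B.carrier => freeHom B b) := by
  constructor
  · intro b1 b2 e
    funext i
    have := congrArg (fun h => ThAlgebraHom.toFun h (T.pr i)) e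
    simpa [freeHom, B.act_pr] using this
  · intro h
    exact ⟨_, (freeHom_eq h).symm⟩

/-- The unit homomorphism `Free_S n ⟶ F*(Free_T n)`, given by `F.app`. -/
def unitHom {S T : AlgTheory} (F : TheoryHom S T) (n : ℕ) :
    S.freeAlg n ⟶ F.pullback.obj (T.freeAlg n) where
  toFun := F.app
  map_act t a := F.map_subst t a

lemma precomp_unit_bij_obj {S T : AlgTheory} (F : TheoryHom S T)
    [F.pullback.Full] [F.pullback.Faithful] (n : ℕ) (C : ThAlgebra T) :
    Function.Bijective (fun g : (F.pullback.obj (T.freeAlg n) ⟶ F.pullback.obj C) =>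
      unitHom F n ≫ g) := by
  have hFmap : Function.Bijective
      (fun h : (T.freeAlg n ⟶ C) => F.pullback.map h) :=
    ⟨fun _ _ e => F.pullback.map_injective e, fun g => F.pullback.map_surjective g⟩
  have key : ∀ h : (T.freeAlg n ⟶ C),
      unitHom F n ≫ F.pullback.map h
        = freeHom (F.pullback.obj C) (fun i => h.toFun (T.pr i)) := by
    intro h
    rw [freeHom_eq (unitHom F n ≫ F.pullback.map h)]
    congr 1
    funext i
    show h.toFun (F.app (S.pr i)) = h.toFun (T.pr i)
    rw [F.map_pr]
  have hcomp : Function.Bijective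
      ((fun g : (F.pullback.obj (T.freeAlg n) ⟶ F.pullback.obj C) => unitHom F n ≫ g)
        ∘ (fun h : (T.freeAlg n ⟶ C) => F.pullback.map h)) := by
    have : ((fun g : (F.pullback.obj (T.freeAlg n) ⟶ F.pullback.obj C) => unitHom F n ≫ g)
        ∘ (fun h : (T.freeAlg n ⟶ C) => F.pullback.map h))
        = (fun b => freeHom (F.pullback.obj C) b)
          ∘ (fun h : ThAlgebraHom (T.freeAlg n) C => fun i => h.toFun (T.pr i)) := by
      funext h
      exact key h
    rw [this]
    exact (freeHom_bijective _).comp (free_bijective _)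
  exact ((Function.Bijective.of_comp_iff _ hFmap).1 hcomp)

lemma postcomp_iso_bij {T : AlgTheory} {X A B : ThAlgebra T} (i : A ≅ B) :
    Function.Bijective (fun g : X ⟶ A => g ≫ i.hom) := by
  constructor
  · intro a b e
    have := congrArg (fun g => g ≫ i.inv) e
    simpa using this
  · intro g
    exact ⟨g ≫ i.inv, by simp⟩

lemma precomp_unit_bij {S T : AlgTheory} (F : TheoryHom S T)
    (h : F.pullback.IsEquivalence) (n : ℕ) (B : ThAlgebra S) :
    Function.Bijective
      (fun g : (F.pullback.obj (T.freeAlg n) ⟶ B) => unitHom F n ≫ g) := by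
  haveI := h
  obtain ⟨C, ⟨i⟩⟩ : ∃ C, Nonempty (F.pullback.obj C ≅ B) :=
    ⟨_, ⟨F.pullback.objObjPreimageIso B⟩⟩
  have heq : (fun g : (F.pullback.obj (T.freeAlg n) ⟶ B) => unitHom F n ≫ g)
      = (fun g' : (S.freeAlg n ⟶ F.pullback.obj C) => g' ≫ i.hom)
        ∘ (fun g : (F.pullback.obj (T.freeAlg n) ⟶ F.pullback.obj C) => unitHom F n ≫ g)
        ∘ (fun g : (F.pullback.obj (T.freeAlg n) ⟶ B) => g ≫ i.inv) := by
    funext g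
    simp
  rw [heq]
  exact (postcomp_iso_bij i).comp ((precomp_unit_bij_obj F n C).comp (postcomp_iso_bij i.symm))

/-- if the functor `F* : Alg(T) → Alg(S)` induced by a map of
algebraic theories `F : S → T` is an equivalence of categories, then every
component `F_n : S(n) → T(n)` is a bijection, i.e. `F` is an isomorphism of
algebraic theories. -/
theorem theoryHom_iso_of_pullback_equivalence {S T : AlgTheory} (F : TheoryHom S T)
    (h : F.pullback.IsEquivalence) :
    ∀ n : ℕ, Function.Bijective (fun t : S.carrier n => F.app t) := by
  intro n
  have hb := fun B => precomp_unit_bij F h n B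
  obtain ⟨ρ, hρ⟩ := (hb (S.freeAlg n)).2 (𝟙 _)
  simp only at hρ
  have hρ2 : ρ ≫ unitHom F n = 𝟙 _ := by
    apply (hb (F.pullback.obj (T.freeAlg n))).1
    show unitHom F n ≫ ρ ≫ unitHom F n = unitHom F n ≫ 𝟙 _
    rw [← Category.assoc, hρ, Category.id_comp, Category.comp_id]
  constructor
  · intro a b e
    have h1 := congrArg (fun f => ThAlgebraHom.toFun f a) hρ
    have h2 := congrArg (fun f => ThAlgebraHom.toFun f b) hρ
    change ρ.toFun ((unitHom F n).toFun a) = a at h1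
    change ρ.toFun ((unitHom F n).toFun b) = b at h2
    exact h1.symm.trans ((congrArg ρ.toFun e).trans h2)
  · intro u
    refine ⟨ρ.toFun u, ?_⟩
    have := congrArg (fun f => ThAlgebraHom.toFun f u) hρ2
    exact this
end

section
/- Let 𝒯 be an algebraic theory, X a presheaf over 𝒯, and p ∈ ℕ. The presheaf m ↦ X(m+p), with renaming and action affecting only the first m variables and leaving the last p variables undisturbed, together with the evaluation map given by substitution, is an exponential object 𝒯^p ⇒ X in the category P𝒯. -/
open CategoryTheory Limits

/-- A presheaf over an algebraic theory `T`: a family of sets with a compatible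
right action of `T` (renaming is derived, acting by projections). -/
structure ThPresheaf (T : AlgTheory) where
  obj : ℕ → Type
  act : ∀ {m n : ℕ}, obj m → (Fin m → T.carrier n) → obj n
  act_pr : ∀ {m : ℕ} (x : obj m), act x T.pr = x
  act_subst : ∀ {m n k : ℕ} (x : obj m) (s : Fin m → T.carrier n) (r : Fin n → T.carrier k),
    act (act x s) r = act x fun i => T.subst (s i) r

/-- Maps of presheaves over `T`. -/
structure ThPresheafHom {T : AlgTheory} (X Y : ThPresheaf T) where
  toFun : ∀ n, X.obj n → Y.obj n
  map_act : ∀ {m n : ℕ} (x : X.obj m) (s : Fin m → T.carrier n),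
    toFun n (X.act x s) = Y.act (toFun m x) s

@[ext] theorem ThPresheafHom.ext {T : AlgTheory} {X Y : ThPresheaf T}
    {f g : ThPresheafHom X Y} (h : ∀ n x, f.toFun n x = g.toFun n x) : f = g := by
  cases f; cases g
  congr 1
  funext n x
  exact h n x

/-- Composition of presheaf maps (diagrammatic order). -/
def ThPresheafHom.comp {T : AlgTheory} {X Y Z : ThPresheaf T}
    (f : ThPresheafHom X Y) (g : ThPresheafHom Y Z) : ThPresheafHom X Z where
  toFun n x := g.toFun n (f.toFun n x)
  map_act x s := by
    show g.toFun _ (f.toFun _ (X.act x s)) = _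
    rw [f.map_act, g.map_act]

/-- The universal presheaf: `T` acting on itself on the right. -/
def AlgTheory.univ (T : AlgTheory) : ThPresheaf T where
  obj := T.carrier
  act x s := T.subst x s
  act_pr := T.subst_pr
  act_subst := T.subst_assoc

/-- The finite power `T^p` of the universal presheaf. -/
def AlgTheory.pow (T : AlgTheory) (p : ℕ) : ThPresheaf T where
  obj n := Fin p → T.carrier n
  act x s := fun j => T.subst (x j) s
  act_pr x := funext fun j => T.subst_pr (x j)
  act_subst x s r := funext fun j => T.subst_assoc (x j) s r

/-- Extension of a substitution tuple `s : T(n)^m` to `T(n+p)^(m+p)`, leaving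
the last `p` variables undisturbed. -/
def AlgTheory.extendSub (T : AlgTheory) {p m n : ℕ} (s : Fin m → T.carrier n) :
    Fin (m + p) → T.carrier (n + p) :=
  Fin.addCases (fun i => T.rename (Fin.castAdd p) (s i)) fun j => T.pr (Fin.natAdd n j)

theorem AlgTheory.extendSub_pr (T : AlgTheory) {p m : ℕ} :
    (T.extendSub (p := p) fun i : Fin m => T.pr i) = fun i => T.pr i := by
  funext i
  refine Fin.addCases (fun j => ?_) (fun j => ?_) i <;>
    simp [AlgTheory.extendSub, AlgTheory.rename, T.pr_subst]

theorem AlgTheory.extendSub_comp (T : AlgTheory) {p m n k : ℕ}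
    (s : Fin m → T.carrier n) (r : Fin n → T.carrier k) :
    (fun i => T.subst (T.extendSub (p := p) s i) (T.extendSub (p := p) r)) =
      T.extendSub (p := p) fun i => T.subst (s i) r := by
  funext i
  refine Fin.addCases (fun j => ?_) (fun j => ?_) i <;>
    simp [AlgTheory.extendSub, AlgTheory.rename, T.pr_subst, T.subst_assoc]

/-- The function-space presheaf `T^p ⇒ X`: at level `m` it is `X(m+p)`, with
the action affecting only the first `m` variables. -/
def ThPresheaf.exp {T : AlgTheory} (X : ThPresheaf T) (p : ℕ) : ThPresheaf T where
  obj m := X.obj (m + p)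
  act x s := X.act x (T.extendSub s)
  act_pr x := by
    show X.act x (T.extendSub T.pr) = x
    rw [show T.extendSub (p := p) T.pr = T.pr from T.extendSub_pr, X.act_pr]
  act_subst x s r := by
    show X.act (X.act x (T.extendSub s)) (T.extendSub r) =
      X.act x (T.extendSub fun i => T.subst (s i) r)
    rw [X.act_subst, T.extendSub_comp]

/-- The pointwise (categorical) product of presheaves. -/
def ThPresheaf.prod {T : AlgTheory} (X Y : ThPresheaf T) : ThPresheaf T where
  obj n := X.obj n × Y.obj n
  act x s := (X.act x.1 s, Y.act x.2 s)
  act_pr x := by cases x with | mk a b => simp [X.act_pr, Y.act_pr]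
  act_subst x s r := by cases x with | mk a b => simp [X.act_subst, Y.act_subst]

/-- The tuple `(pr₁, …, pr_n, c₁, …, c_p)`. -/
def glueSub (T : AlgTheory) {p n : ℕ} (c : Fin p → T.carrier n) :
    Fin (n + p) → T.carrier n :=
  Fin.addCases (fun i => T.pr i) c

/-- Evaluation `(T^p ⇒ X) × T^p → X`, given by substitution. -/
def evalHom {T : AlgTheory} (X : ThPresheaf T) (p : ℕ) :
    ThPresheafHom ((X.exp p).prod (T.pow p)) X where
  toFun n x := X.act x.1 (glueSub T x.2)
  map_act := by
    intro m n x s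
    obtain ⟨a, c⟩ : X.obj (m + p) × (Fin p → T.carrier m) := x
    show X.act (X.act a (T.extendSub s)) (glueSub T fun j => T.subst (c j) s) =
      X.act (X.act a (glueSub T c)) s
    rw [X.act_subst, X.act_subst]
    congr 1
    funext i
    refine Fin.addCases (fun j => ?_) (fun j => ?_) i <;>
      simp [AlgTheory.extendSub, glueSub, AlgTheory.rename, T.pr_subst, T.subst_assoc,
        T.subst_pr]

/-- Weakening tuple: the first `n` projections of `T(n+p)`. -/
def wkSub (T : AlgTheory) (p n : ℕ) : Fin n → T.carrier (n + p) :=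
  fun i => T.pr (Fin.castAdd p i)

/-- The last `p` projections of `T(n+p)`. -/
def varSub (T : AlgTheory) (p n : ℕ) : Fin p → T.carrier (n + p) :=
  fun j => T.pr (Fin.natAdd n j)

/-- Currying of a map `Y × T^p → X`. -/
def curryHom {T : AlgTheory} {X : ThPresheaf T} {p : ℕ} {Y : ThPresheaf T}
    (g : ThPresheafHom (Y.prod (T.pow p)) X) : ThPresheafHom Y (X.exp p) where
  toFun n y := g.toFun (n + p) (Y.act y (wkSub T p n), varSub T p n)
  map_act := by
    intro m n y s
    show g.toFun (n + p) (Y.act (Y.act y s) (wkSub T p n), varSub T p n) =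
      X.act (g.toFun (m + p) (Y.act y (wkSub T p m), varSub T p m)) (T.extendSub s)
    rw [← g.map_act (Y.act y (wkSub T p m), varSub T p m) (T.extendSub s)]
    show _ = g.toFun (n + p)
      (Y.act (Y.act y (wkSub T p m)) (T.extendSub s),
        fun j => T.subst (varSub T p m j) (T.extendSub s))
    rw [Y.act_subst, Y.act_subst]
    refine congrArg _ (Prod.ext ?_ ?_)
    · exact congrArg (Y.act y) (funext fun i => by
        simp only [wkSub, AlgTheory.extendSub, AlgTheory.rename, T.pr_subst, Fin.addCases_left]; rfl)
    · exact funext fun j => by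
        simp [varSub, AlgTheory.extendSub, T.pr_subst]

theorem curryHom_eval {T : AlgTheory} {X : ThPresheaf T} {p : ℕ} {Y : ThPresheaf T}
    (g : ThPresheafHom (Y.prod (T.pow p)) X) (n : ℕ) (y : Y.obj n)
    (c : Fin p → T.carrier n) :
    (evalHom X p).toFun n ((curryHom g).toFun n y, c) = g.toFun n (y, c) := by
  show X.act (g.toFun (n + p) (Y.act y (wkSub T p n), varSub T p n)) (glueSub T c) =
    g.toFun n (y, c)
  rw [← g.map_act (Y.act y (wkSub T p n), varSub T p n) (glueSub T c)]
  show g.toFun n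
      (Y.act (Y.act y (wkSub T p n)) (glueSub T c),
        fun j => T.subst (varSub T p n j) (glueSub T c)) = _
  rw [Y.act_subst]
  congr 2
  · have : (fun i => T.subst (wkSub T p n i) (glueSub T c)) = T.pr := by
      funext i
      simp [wkSub, glueSub, T.pr_subst]
    rw [this, Y.act_pr]
  · funext j
    simp [varSub, glueSub, T.pr_subst]

/-- the presheaf `m ↦ X(m+p)`, with action leaving the last `p`
variables undisturbed and evaluation given by substitution, is an exponential
object `T^p ⇒ X` in `PT`: maps `Y × T^p → X` correspond uniquely to maps
`Y → (T^p ⇒ X)` via evaluation. -/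
theorem exp_is_exponential (T : AlgTheory) (X : ThPresheaf T) (p : ℕ)
    (Y : ThPresheaf T) (g : ThPresheafHom (Y.prod (T.pow p)) X) :
    ∃! h : ThPresheafHom Y (X.exp p),
      ∀ (n : ℕ) (y : Y.obj n) (c : Fin p → T.carrier n),
        (evalHom X p).toFun n (h.toFun n y, c) = g.toFun n (y, c) := by
  refine ⟨curryHom g, curryHom_eval g, ?_⟩
  intro h' hcond
  ext n y
  have key := hcond (n + p) (Y.act y (wkSub T p n)) (varSub T p n)
  have hmap := h'.map_act y (wkSub T p n)
  -- rewrite the LHS of key using map_act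
  rw [hmap] at key
  -- key : X.act (X.act (h'.toFun n y) (T.extendSub (wkSub T p n))) (glueSub T (varSub T p n))
  --        = g.toFun (n+p) (Y.act y (wkSub T p n), varSub T p n)
  show h'.toFun n y = (curryHom g).toFun n y
  rw [show (curryHom g).toFun n y
      = g.toFun (n + p) (Y.act y (wkSub T p n), varSub T p n) from rfl, ← key]
  show h'.toFun n y =
    X.act (X.act (h'.toFun n y) (T.extendSub (wkSub T p n))) (glueSub T (varSub T p n))
  refine Eq.trans ?_ (X.act_subst (m := n + p) _ _ _).symm
  have : (fun i => T.subst (T.extendSub (p := p) (wkSub T p n) i)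
      (glueSub T (varSub T p n))) = T.pr := by
    funext i
    refine Fin.addCases (fun j => ?_) (fun j => ?_) i <;>
      simp [AlgTheory.extendSub, wkSub, varSub, glueSub, AlgTheory.rename,
        T.pr_subst, T.subst_assoc]
  rw [this]
  exact (X.act_pr (m := n + p) _).symm
end

section
/- Let ℒ and ℳ be λ-theories and let F : ℒ → ℳ be a map of the underlying algebraic theories such that F(app) = app and F(𝕒) = 𝕒. Then F commutes with all the retractions ρ_n and sections λ_n, i.e. F is a map of λ-theories. -/
open CategoryTheory Limits

/-- Given a substitution tuple `s : T(m)^n`, the tuple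
`s⁺ : T(m+1)^(n+1)` consisting of the components of `s` weakened along
`Fin m ↪ Fin (m+1)` followed by the last projection. -/
def AlgTheory.lift (T : AlgTheory) {n m : ℕ} (s : Fin n → T.carrier m) :
    Fin (n + 1) → T.carrier (m + 1) :=
  Fin.lastCases (T.pr (Fin.last m)) fun i => T.rename Fin.castSucc (s i)

/-- A λ-theory: an algebraic theory with semi-closed structure, i.e. natural
retractions of `ℒ(n)` onto `ℒ(n+1)` (retraction `ρ`, section `λ` = `abs`),
compatible with substitution. -/
structure LambdaTheory extends AlgTheory where
  rho : ∀ {n : ℕ}, carrier n → carrier (n + 1)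
  abs : ∀ {n : ℕ}, carrier (n + 1) → carrier n
  rho_abs : ∀ {n : ℕ} (u : carrier (n + 1)), rho (abs u) = u
  rho_subst : ∀ {n m : ℕ} (t : carrier n) (s : Fin n → carrier m),
    subst (rho t) (AlgTheory.lift toAlgTheory s) = rho (subst t s)
  abs_subst : ∀ {n m : ℕ} (u : carrier (n + 1)) (s : Fin n → carrier m),
    subst (abs u) s = abs (subst u (AlgTheory.lift toAlgTheory s))

/-- The binary application operation `app = ρ(pr₁) ∈ ℒ(2)`. -/
def LambdaTheory.appOp (L : LambdaTheory) : L.carrier 2 := L.rho (L.pr 0)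

/-- The constant `𝕒 = λ(λ(app)) ∈ ℒ(0)`. -/
def LambdaTheory.appConst (L : LambdaTheory) : L.carrier 0 := L.abs (L.abs L.appOp)
section Aux

lemma AlgTheory.subst_app_lift (L : LambdaTheory) {n : ℕ} (s : Fin 1 → L.carrier n) :
    L.subst L.appOp (L.lift s) = L.rho (s 0) := by
  rw [LambdaTheory.appOp, L.rho_subst, L.pr_subst]

lemma LambdaTheory.rho_eq (L : LambdaTheory) {n : ℕ} (t : L.carrier n) :
    L.rho t = L.subst L.appOp (L.lift fun _ : Fin 1 => t) := by
  rw [AlgTheory.subst_app_lift]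

lemma LambdaTheory.abs_rho_eq (L : LambdaTheory) {n : ℕ} (t : L.carrier n) :
    L.abs (L.rho t) = L.subst (L.abs L.appOp) (fun _ : Fin 1 => t) := by
  rw [L.abs_subst, AlgTheory.subst_app_lift]

lemma LambdaTheory.abs_app_eq (L : LambdaTheory) :
    L.abs L.appOp = L.rho L.appConst := by
  rw [LambdaTheory.appConst, L.rho_abs]

lemma TheoryHom.map_lift {S T : AlgTheory} (F : TheoryHom S T) {n m : ℕ}
    (s : Fin n → S.carrier m) (i : Fin (n + 1)) :
    F.app (S.lift s i) = T.lift (fun j => F.app (s j)) i := by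
  unfold AlgTheory.lift
  induction i using Fin.lastCases with
  | last => simp [F.map_pr]
  | cast i => simp [AlgTheory.rename, F.map_subst, F.map_pr]

end Aux

/-- a map of the underlying algebraic theories of λ-theories which
preserves the binary application `app` and the constant `𝕒` commutes with all
retractions `ρ` and sections `λ`, i.e. it is a map of λ-theories. -/
theorem theoryHom_is_lambdaHom (L M : LambdaTheory)
    (F : TheoryHom L.toAlgTheory M.toAlgTheory)
    (happ : F.app L.appOp = M.appOp) (haconst : F.app L.appConst = M.appConst) :
    (∀ {n : ℕ} (t : L.carrier n), F.app (L.rho t) = M.rho (F.app t)) ∧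
    (∀ {n : ℕ} (u : L.carrier (n + 1)), F.app (L.abs u) = M.abs (F.app u)) := by
  have hrho : ∀ {n : ℕ} (t : L.carrier n), F.app (L.rho t) = M.rho (F.app t) := by
    intro n t
    rw [L.rho_eq, F.map_subst, happ, M.rho_eq]
    congr 1
    funext i
    exact F.map_lift _ i
  refine ⟨hrho, ?_⟩
  intro n u
  have h1 : L.abs u = L.abs (L.rho (L.abs u)) := by rw [L.rho_abs]
  rw [h1, L.abs_rho_eq, F.map_subst, L.abs_app_eq, hrho, haconst,
    ← M.abs_app_eq, ← M.abs_rho_eq, ← hrho, L.rho_abs]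
end

section
/- In any λ-theory ℒ, for every n and every s ∈ ℒ(n), writing ŝ = λ^n(s) ∈ ℒ(0) for the result of applying the sections λ n times, one has s = app_n⟨(w(ŝ), pr_1, …, pr_n)⟩, where w(ŝ) ∈ ℒ(n) is ŝ weakened by renaming to n variables and app_n = ρ^n(pr_1) ∈ ℒ(n+1) is the n-fold iterated application. -/
open CategoryTheory Limits

/-- Iterated retraction: `ρⁿ(pr₁) ∈ ℒ(n+1)` is the `n`-fold iterated
application `app_n`. -/
def LambdaTheory.rhoIter (L : LambdaTheory) : ∀ n : ℕ, L.carrier 1 → L.carrier (n + 1)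
  | 0, t => t
  | n + 1, t => L.rho (L.rhoIter n t)

/-- Iterated section: `λⁿ(s) ∈ ℒ(0)` for `s ∈ ℒ(n)`. -/
def LambdaTheory.absIter (L : LambdaTheory) : ∀ {n : ℕ}, L.carrier n → L.carrier 0
  | 0, t => t
  | _ + 1, t => L.absIter (L.abs t)

lemma AlgTheory.rename_rename (T : AlgTheory) {n m k : ℕ} (f : Fin n → Fin m)
    (g : Fin m → Fin k) (t : T.carrier n) :
    T.rename g (T.rename f t) = T.rename (g ∘ f) t := by
  unfold AlgTheory.rename
  rw [T.subst_assoc]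
  simp only [T.pr_subst, Function.comp]

lemma AlgTheory.rename_pr (T : AlgTheory) {n m : ℕ} (f : Fin n → Fin m) (i : Fin n) :
    T.rename f (T.pr i) = T.pr (f i) := T.pr_subst i _

/-- in any λ-theory, every `s ∈ ℒ(n)` is recovered from its
iterated abstraction `ŝ = λⁿ(s) ∈ ℒ(0)` by substituting the weakening of `ŝ`
together with the projections into the iterated application
`app_n = ρⁿ(pr₁) ∈ ℒ(n+1)`. -/
theorem abstraction_recovery (L : LambdaTheory) (n : ℕ) (s : L.carrier n) :
    s = L.subst (L.rhoIter n (L.pr 0))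
          (Fin.cases (L.toAlgTheory.rename Fin.elim0 (L.absIter s)) fun i => L.pr i) := by
  induction n with
  | zero =>
    show s = L.subst (L.pr 0) _
    rw [L.pr_subst]
    show s = L.subst s fun i => L.pr (Fin.elim0 i)
    rw [show (fun i : Fin 0 => L.pr (Fin.elim0 i)) = L.pr from funext fun i => i.elim0,
      L.subst_pr]
  | succ n ih =>
    have h := ih (L.abs s)
    conv_lhs => rw [← L.rho_abs s, h]
    show L.rho _ = L.subst (L.rho (L.rhoIter n (L.pr 0))) _
    rw [← L.rho_subst]
    congr 1
    funext j
    refine Fin.lastCases ?_ (fun i => ?_) j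
    · simp only [AlgTheory.lift, Fin.lastCases_last]
      rw [show (Fin.last (n + 1)) = (Fin.last n).succ from (Fin.succ_last n).symm,
        Fin.cases_succ]
    · simp only [AlgTheory.lift, Fin.lastCases_castSucc]
      refine Fin.cases ?_ (fun i' => ?_) i
      · show L.toAlgTheory.rename Fin.castSucc
          (L.toAlgTheory.rename Fin.elim0 (L.absIter (L.abs s))) = _
        rw [L.toAlgTheory.rename_rename]
        show _ = L.toAlgTheory.rename Fin.elim0 (L.absIter (L.abs s))
        congr 1
        funext x
        exact x.elim0
      · show L.toAlgTheory.rename Fin.castSucc (L.pr i') = _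
        rw [L.toAlgTheory.rename_pr,
          show (Fin.castSucc i'.succ) = (Fin.castSucc i').succ from (Fin.succ_castSucc i').symm,
          Fin.cases_succ]
end

section
/- Let ℒ be a λ-theory and let Mℒ be the monoid with underlying set ℒ(1), multiplication t · s = t⟨s⟩ and unit pr_1, regarded as a one-object category. Then the Karoubi envelope (Cauchy completion, category of idempotents) of this one-object category is cartesian closed. -/
open CategoryTheory Limits

/-- The monoid `Mℒ = ℒ(1)` with substitution as multiplication and the
projection (variable) as unit. -/
instance monoidM (L : LambdaTheory) : Monoid (L.carrier 1) where
  mul t s := L.subst t fun _ => s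
  one := L.pr 0
  mul_assoc a b c := by
    show L.subst (L.subst a fun _ => b) (fun _ => c) =
      L.subst a fun _ => L.subst b fun _ => c
    rw [L.subst_assoc]
  one_mul a := L.pr_subst 0 fun _ => a
  mul_one a := by
    show L.subst a (fun _ => L.pr 0) = a
    have : (fun _ : Fin 1 => L.pr (0 : Fin 1)) = L.pr := by
      funext i
      rw [Subsingleton.elim i 0]
    rw [this, L.subst_pr]


namespace KProof

open Fin

variable (L : LambdaTheory)

/-- Weakening of a term: rename along `Fin.castSucc`. -/
def wk {n : ℕ} (t : L.carrier n) : L.carrier (n + 1) :=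
  L.subst t fun i => L.pr i.castSucc

/-- Application of two terms of the same arity. -/
def ap {n : ℕ} (t s : L.carrier n) : L.carrier n :=
  L.subst (L.rho t) (Fin.snoc L.pr s)

/-- Substitution of a single term (of any arity) for the variable of a unary term. -/
def sb {m : ℕ} (t : L.carrier 1) (s : L.carrier m) : L.carrier m :=
  L.subst t fun _ => s

lemma lift_eq {n m : ℕ} (s : Fin n → L.carrier m) :
    L.toAlgTheory.lift s = Fin.snoc (fun i => wk L (s i)) (L.pr (Fin.last m)) := by
  funext i
  induction i using Fin.lastCases with
  | last => simp [AlgTheory.lift]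
  | cast j => simp [AlgTheory.lift, AlgTheory.rename, wk]

lemma subst_sb {m k : ℕ} (t : L.carrier 1) (s : L.carrier m) (r : Fin m → L.carrier k) :
    L.subst (sb L t s) r = sb L t (L.subst s r) := by
  simp [sb, L.subst_assoc]

lemma sb_sb {m : ℕ} (a b : L.carrier 1) (c : L.carrier m) :
    sb L a (sb L b c) = sb L (sb L a b) c := by
  simp [sb, L.subst_assoc]

lemma beta {n : ℕ} (u : L.carrier (n + 1)) (s : L.carrier n) :
    ap L (L.abs u) s = L.subst u (Fin.snoc L.pr s) := by
  rw [ap, L.rho_abs]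

lemma wk_snoc {n m : ℕ} (t : L.carrier n) (r : Fin n → L.carrier m) (a : L.carrier m) :
    L.subst (wk L t) (Fin.snoc r a) = L.subst t r := by
  rw [wk, L.subst_assoc]
  congr 1
  funext i
  rw [L.pr_subst, Fin.snoc_castSucc]

lemma wk_subst {n m : ℕ} (t : L.carrier n) (r : Fin n → L.carrier m) :
    wk L (L.subst t r) = L.subst t fun i => wk L (r i) := by
  rw [wk, L.subst_assoc]
  rfl

lemma subst_wk_lift {n m : ℕ} (t : L.carrier n) (r : Fin n → L.carrier m) :
    L.subst (wk L t) (L.toAlgTheory.lift r) = wk L (L.subst t r) := by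
  rw [lift_eq, wk_snoc, wk_subst]

lemma subst_ap {n m : ℕ} (t s : L.carrier n) (r : Fin n → L.carrier m) :
    L.subst (ap L t s) r = ap L (L.subst t r) (L.subst s r) := by
  rw [ap, ap, ← L.rho_subst t r, L.subst_assoc, L.subst_assoc]
  congr 1
  funext i
  induction i using Fin.lastCases with
  | last => rw [lift_eq, Fin.snoc_last, Fin.snoc_last, L.pr_subst, Fin.snoc_last]
  | cast j =>
      rw [lift_eq, Fin.snoc_castSucc, Fin.snoc_castSucc, L.pr_subst, wk_snoc, L.subst_pr]

lemma betaWk {n : ℕ} (B : L.carrier (n + 1)) (s : L.carrier (n + 1)) :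
    ap L (wk L (L.abs B)) s = L.subst B (Fin.snoc (fun j => L.pr j.castSucc) s) := by
  have h1 : wk L (L.abs B) = L.abs (L.subst B (L.toAlgTheory.lift fun i => L.pr i.castSucc)) := by
    rw [wk, L.abs_subst]
  rw [h1, beta, L.subst_assoc]
  congr 1
  funext i
  induction i using Fin.lastCases with
  | last => rw [lift_eq, Fin.snoc_last, Fin.snoc_last, L.pr_subst, Fin.snoc_last]
  | cast j =>
      rw [lift_eq, Fin.snoc_castSucc, Fin.snoc_castSucc, wk_snoc, L.pr_subst]

/-- The K combinator `λ x y. x` at arity `n`. -/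
def Kt (n : ℕ) : L.carrier n := L.abs (L.abs (L.pr (Fin.castSucc (Fin.last n))))

/-- The K' combinator `λ x y. y` at arity `n`. -/
def Kt' (n : ℕ) : L.carrier n := L.abs (L.abs (L.pr (Fin.last (n + 1))))

lemma subst_Kt {n m : ℕ} (r : Fin n → L.carrier m) : L.subst (Kt L n) r = Kt L m := by
  rw [Kt, L.abs_subst, L.abs_subst, L.pr_subst, lift_eq, lift_eq, Fin.snoc_castSucc,
    Fin.snoc_last, wk, L.pr_subst, Kt]

lemma subst_Kt' {n m : ℕ} (r : Fin n → L.carrier m) : L.subst (Kt' L n) r = Kt' L m := by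
  rw [Kt', L.abs_subst, L.abs_subst, L.pr_subst, lift_eq, Fin.snoc_last, Kt']

lemma ap_Kt {n : ℕ} (a : L.carrier n) : ap L (Kt L n) a = L.abs (wk L a) := by
  rw [Kt, beta, L.abs_subst, L.pr_subst, lift_eq, Fin.snoc_castSucc, Fin.snoc_last]

lemma ap_ap_Kt {n : ℕ} (a b : L.carrier n) : ap L (ap L (Kt L n) a) b = a := by
  rw [ap_Kt, beta, wk_snoc, L.subst_pr]

lemma ap_Kt' {n : ℕ} (a : L.carrier n) : ap L (Kt' L n) a = L.abs (L.pr (Fin.last n)) := by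
  rw [Kt', beta, L.abs_subst, L.pr_subst, lift_eq, Fin.snoc_last]

lemma ap_ap_Kt' {n : ℕ} (a b : L.carrier n) : ap L (ap L (Kt' L n) a) b = b := by
  rw [ap_Kt', beta, L.pr_subst, Fin.snoc_last]

/-- Pairing `⟨t, s⟩ = λ z. z t s` at arity `n`. -/
def pairt {n : ℕ} (t s : L.carrier n) : L.carrier n :=
  L.abs (ap L (ap L (L.pr (Fin.last n)) (wk L t)) (wk L s))

lemma subst_pair {n m : ℕ} (t s : L.carrier n) (r : Fin n → L.carrier m) :
    L.subst (pairt L t s) r = pairt L (L.subst t r) (L.subst s r) := by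
  rw [pairt, L.abs_subst, subst_ap, subst_ap, L.pr_subst, lift_eq, Fin.snoc_last, ← lift_eq,
    subst_wk_lift, subst_wk_lift, pairt]

lemma fst_pair {n : ℕ} (t s : L.carrier n) : ap L (pairt L t s) (Kt L n) = t := by
  rw [pairt, beta, subst_ap, subst_ap, L.pr_subst, Fin.snoc_last, wk_snoc, wk_snoc,
    L.subst_pr, L.subst_pr, ap_ap_Kt]

lemma snd_pair {n : ℕ} (t s : L.carrier n) : ap L (pairt L t s) (Kt' L n) = s := by
  rw [pairt, beta, subst_ap, subst_ap, L.pr_subst, Fin.snoc_last, wk_snoc, wk_snoc,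
    L.subst_pr, L.subst_pr, ap_ap_Kt']

end KProof

namespace KProof

section Level1

variable (L : LambdaTheory)

/-- The first variable of `ℒ(2)`. -/
def vA : L.carrier 2 := L.pr (Fin.castSucc 0)

/-- The second (last) variable of `ℒ(2)`. -/
def vB : L.carrier 2 := L.pr (Fin.last 1)

/-- The first projection `λ p. p K` as an element of `ℒ(1)`. -/
def Fm : L.carrier 1 := ap L (L.pr 0) (Kt L 1)

/-- The second projection `λ p. p K'` as an element of `ℒ(1)`. -/
def Sm : L.carrier 1 := ap L (L.pr 0) (Kt' L 1)

lemma mulM (a b : L.carrier 1) : a * b = sb L a b := rfl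

lemma sb_mul {m : ℕ} (a b : L.carrier 1) (c : L.carrier m) :
    sb L (a * b) c = sb L a (sb L b c) := (sb_sb L a b c).symm

lemma sb_apt {m : ℕ} (a b : L.carrier 1) (c : L.carrier m) :
    sb L (ap L a b) c = ap L (sb L a c) (sb L b c) := by
  rw [sb, subst_ap]; rfl

lemma sb_pairt {m : ℕ} (a b : L.carrier 1) (c : L.carrier m) :
    sb L (pairt L a b) c = pairt L (sb L a c) (sb L b c) := by
  rw [sb, subst_pair]; rfl

lemma sb_Fm {m : ℕ} (t : L.carrier m) : sb L (Fm L) t = ap L t (Kt L m) := by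
  rw [Fm, sb, subst_ap, L.pr_subst, subst_Kt]

lemma sb_Sm {m : ℕ} (t : L.carrier m) : sb L (Sm L) t = ap L t (Kt' L m) := by
  rw [Sm, sb, subst_ap, L.pr_subst, subst_Kt']

lemma sb_Fm_pair {m : ℕ} (s t : L.carrier m) : sb L (Fm L) (pairt L s t) = s := by
  rw [sb_Fm, fst_pair]

lemma sb_Sm_pair {m : ℕ} (s t : L.carrier m) : sb L (Sm L) (pairt L s t) = t := by
  rw [sb_Sm, snd_pair]

lemma wk_eq_sb (u : L.carrier 1) : wk L u = sb L u (vA L) := by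
  rw [wk, sb]
  congr 1
  funext i
  rw [Subsingleton.elim i 0]
  rfl

lemma sb_vB {m : ℕ} (c : Fin 2 → L.carrier m) : L.subst (vB L) c = c (Fin.last 1) :=
  L.pr_subst _ _

lemma sb_vA {m : ℕ} (c : Fin 2 → L.carrier m) : L.subst (vA L) c = c (Fin.castSucc 0) :=
  L.pr_subst _ _

/-- Multiplying an abstraction by `t` substitutes the weakening of `t`. -/
lemma absB_mul (B : L.carrier 2) (t : L.carrier 1) :
    L.abs B * t = L.abs (L.subst B (Fin.snoc (fun _ : Fin 1 => wk L t) (vB L))) := by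
  show L.subst (L.abs B) (fun _ => t) = _
  rw [L.abs_subst, lift_eq]
  rfl

end Level1

section MonoidHelpers

variable {N : Type} [Monoid N]

lemma idm_absorb_right {e g u : N} (h : u = e * u * g) (hg : g * g = g) : u * g = u := by
  conv_lhs => rw [h]
  rw [mul_assoc, hg, ← h]

lemma idm_absorb_left {e g u : N} (h : u = e * u * g) (he : e * e = e) : e * u = u := by
  calc e * u = e * (e * u * g) := by rw [← h]
    _ = e * e * u * g := by rw [← mul_assoc, ← mul_assoc]
    _ = e * u * g := by rw [he]
    _ = u := h.symm

end MonoidHelpers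

section Cat

open CategoryTheory CategoryTheory.Limits CategoryTheory.Idempotents

/-- The underlying element of an object of the Karoubi envelope of `Mℒ`. -/
def ip {L : LambdaTheory} (P : Karoubi (SingleObj (L.carrier 1))) : L.carrier 1 := P.p

/-- The underlying element of a morphism in the Karoubi envelope of `Mℒ`. -/
def hf {L : LambdaTheory} {P Q : Karoubi (SingleObj (L.carrier 1))} (f : P ⟶ Q) :
    L.carrier 1 := f.f

variable {L : LambdaTheory}

lemma ip_idem (P : Karoubi (SingleObj (L.carrier 1))) : ip P * ip P = ip P := P.idem

lemma hf_comm {P Q : Karoubi (SingleObj (L.carrier 1))} (f : P ⟶ Q) :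
    hf f = ip Q * hf f * ip P := f.comm.symm

lemma hf_mul_ip {P Q : Karoubi (SingleObj (L.carrier 1))} (f : P ⟶ Q) :
    hf f * ip P = hf f := idm_absorb_right (hf_comm f) (ip_idem P)

lemma ip_mul_hf {P Q : Karoubi (SingleObj (L.carrier 1))} (f : P ⟶ Q) :
    ip Q * hf f = hf f := idm_absorb_left (hf_comm f) (ip_idem Q)

lemma hf_comp {P Q R : Karoubi (SingleObj (L.carrier 1))} (f : P ⟶ Q) (g : Q ⟶ R) :
    hf (f ≫ g) = hf g * hf f := rfl

lemma hf_id (P : Karoubi (SingleObj (L.carrier 1))) : hf (𝟙 P) = ip P := rfl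

/-- Build an object of the Karoubi envelope from an idempotent element. -/
def mkObj (L : LambdaTheory) (e : L.carrier 1) (he : e * e = e) :
    Karoubi (SingleObj (L.carrier 1)) :=
  { X := SingleObj.star (L.carrier 1), p := e, idem := he }

lemma ip_mkObj (L : LambdaTheory) (e : L.carrier 1) (he : e * e = e) :
    ip (mkObj L e he) = e := rfl

/-- Build a morphism in the Karoubi envelope from an element. -/
def mkHom {L : LambdaTheory} (P Q : Karoubi (SingleObj (L.carrier 1))) (v : L.carrier 1)
    (hv : v = ip Q * v * ip P) : P ⟶ Q := ⟨v, hv.symm⟩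

lemma hf_mkHom {L : LambdaTheory} (P Q : Karoubi (SingleObj (L.carrier 1))) (v : L.carrier 1)
    (hv : v = ip Q * v * ip P) : hf (mkHom P Q v hv) = v := rfl

lemma karoubi_hom_ext {P Q : Karoubi (SingleObj (L.carrier 1))} {f g : P ⟶ Q}
    (h : hf f = hf g) : f = g := Karoubi.hom_ext f g h

variable (L : LambdaTheory)

/-- The terminal element: a closed term weakened into `ℒ(1)`. -/
def Tel : L.carrier 1 := L.subst L.appConst Fin.elim0

lemma Tel_mul (s : L.carrier 1) : Tel L * s = Tel L := by
  show L.subst (L.subst L.appConst Fin.elim0) (fun _ => s) = _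
  rw [L.subst_assoc]
  congr 1
  funext i
  exact i.elim0

/-- The terminal object of the Karoubi envelope. -/
def Tobj : Karoubi (SingleObj (L.carrier 1)) :=
  mkObj L (Tel L) (Tel_mul L (Tel L))

/-- The chosen terminal cone. -/
def termCone : LimitCone (Functor.empty.{0} (Karoubi (SingleObj (L.carrier 1)))) :=
  { cone := asEmptyCone (Tobj L)
    isLimit := IsTerminal.ofUniqueHom
      (fun P => mkHom P (Tobj L) (Tel L) (by rw [show ip (Tobj L) = Tel L from rfl, Tel_mul, Tel_mul]))
      (fun P m => by
        apply karoubi_hom_ext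
        rw [hf_mkHom]
        have h := hf_comm m
        rw [show ip (Tobj L) = Tel L from rfl, Tel_mul, Tel_mul] at h
        exact h) }

/-- The product element of two idempotents. -/
def Pel (e f : L.carrier 1) : L.carrier 1 := pairt L (e * Fm L) (f * Sm L)

lemma pair_mul (a b t : L.carrier 1) : pairt L a b * t = pairt L (a * t) (b * t) := by
  show L.subst (pairt L a b) (fun _ => t) = _
  rw [subst_pair]
  rfl

lemma Fm_pair (a b : L.carrier 1) : Fm L * pairt L a b = a := by
  rw [mulM, sb_Fm_pair]

lemma Sm_pair (a b : L.carrier 1) : Sm L * pairt L a b = b := by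
  rw [mulM, sb_Sm_pair]

lemma Pel_idem (e f : L.carrier 1) (he : e * e = e) (hf : f * f = f) :
    Pel L e f * Pel L e f = Pel L e f := by
  conv_lhs => rw [Pel, pair_mul, mul_assoc, mul_assoc, Fm_pair, Sm_pair,
    ← mul_assoc, ← mul_assoc, he, hf]
  rfl

/-- The product object of two objects of the Karoubi envelope. -/
def Pobj (Xo Yo : Karoubi (SingleObj (L.carrier 1))) : Karoubi (SingleObj (L.carrier 1)) :=
  mkObj L (Pel L (ip Xo) (ip Yo)) (Pel_idem L _ _ (ip_idem Xo) (ip_idem Yo))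

lemma ip_Pobj (Xo Yo : Karoubi (SingleObj (L.carrier 1))) :
    ip (Pobj L Xo Yo) = Pel L (ip Xo) (ip Yo) := rfl

lemma Fm_Pel (e f : L.carrier 1) : Fm L * Pel L e f = e * Fm L := by
  rw [Pel, Fm_pair]

lemma Sm_Pel (e f : L.carrier 1) : Sm L * Pel L e f = f * Sm L := by
  rw [Pel, Sm_pair]

/-- First projection as a morphism in the Karoubi envelope. -/
def Pfst (Xo Yo : Karoubi (SingleObj (L.carrier 1))) : Pobj L Xo Yo ⟶ Xo :=
  mkHom _ _ (ip Xo * Fm L) (by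
    rw [ip_Pobj, ← mul_assoc, ip_idem, mul_assoc, Fm_Pel, ← mul_assoc, ip_idem])

/-- Second projection as a morphism in the Karoubi envelope. -/
def Psnd (Xo Yo : Karoubi (SingleObj (L.carrier 1))) : Pobj L Xo Yo ⟶ Yo :=
  mkHom _ _ (ip Yo * Sm L) (by
    rw [ip_Pobj, ← mul_assoc, ip_idem, mul_assoc, Sm_Pel, ← mul_assoc, ip_idem])

/-- The chosen binary product cone. -/
def prodCone (Xo Yo : Karoubi (SingleObj (L.carrier 1))) : LimitCone (pair Xo Yo) :=
  { cone := BinaryFan.mk (Pfst L Xo Yo) (Psnd L Xo Yo)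
    isLimit := BinaryFan.isLimitMk
      (fun s => mkHom s.pt (Pobj L Xo Yo) (pairt L (hf s.fst) (hf s.snd)) (by
        have hl : ip Xo * hf s.fst = hf s.fst := ip_mul_hf s.fst
        have hr : ip Yo * hf s.snd = hf s.snd := ip_mul_hf s.snd
        have hl2 : hf s.fst * ip s.pt = hf s.fst := hf_mul_ip s.fst
        have hr2 : hf s.snd * ip s.pt = hf s.snd := hf_mul_ip s.snd
        rw [ip_Pobj, Pel, pair_mul, mul_assoc, mul_assoc, Fm_pair, Sm_pair,
          hl, hr, pair_mul, hl2, hr2]))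
      (fun s => by
        apply karoubi_hom_ext
        rw [hf_comp, hf_mkHom]
        show ip Xo * Fm L * pairt L (hf s.fst) (hf s.snd) = hf s.fst
        rw [mul_assoc, Fm_pair]
        exact ip_mul_hf s.fst)
      (fun s => by
        apply karoubi_hom_ext
        rw [hf_comp, hf_mkHom]
        show ip Yo * Sm L * pairt L (hf s.fst) (hf s.snd) = hf s.snd
        rw [mul_assoc, Sm_pair]
        exact ip_mul_hf s.snd)
      (fun s m h1 h2 => by
        apply karoubi_hom_ext
        rw [hf_mkHom]
        have e1 : ip Xo * Fm L * hf m = hf s.fst := congrArg Karoubi.Hom.f h1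
        have e2 : ip Yo * Sm L * hf m = hf s.snd := congrArg Karoubi.Hom.f h2
        have hm : Pel L (ip Xo) (ip Yo) * hf m = hf m := ip_mul_hf m
        calc hf m = Pel L (ip Xo) (ip Yo) * hf m := hm.symm
          _ = pairt L (ip Xo * Fm L * hf m) (ip Yo * Sm L * hf m) := by
              rw [Pel, pair_mul, mul_assoc, mul_assoc,
                ← mul_assoc (ip Xo), ← mul_assoc (ip Yo)]
          _ = pairt L (hf s.fst) (hf s.snd) := by rw [e1, e2]) }

/-- The chosen finite products structure on the Karoubi envelope. -/
instance CFPinst : CartesianMonoidalCategory (Karoubi (SingleObj (L.carrier 1))) :=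
  CartesianMonoidalCategory.ofChosenFiniteProducts (termCone L) (fun Xo Yo => prodCone L Xo Yo)

end Cat

end KProof

namespace KProof

open CategoryTheory CategoryTheory.Limits CategoryTheory.Idempotents
open CategoryTheory.MonoidalCategory

section ExpElems

variable (L : LambdaTheory)

/-- The exponential idempotent / functorial action: `λ u. λ b. g (u (x b))`. -/
def expMap (x g : L.carrier 1) : L.carrier 1 :=
  L.abs (sb L g (ap L (vA L) (sb L x (vB L))))

lemma expMap_mul (x g t : L.carrier 1) :
    expMap L x g * t = L.abs (sb L g (ap L (wk L t) (sb L x (vB L)))) := by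
  rw [expMap, absB_mul, subst_sb, subst_ap, sb_vA, Fin.snoc_castSucc, subst_sb, sb_vB,
    Fin.snoc_last]

lemma expMap_comp (x g x' g' : L.carrier 1) :
    expMap L x g * expMap L x' g' = expMap L (x' * x) (g * g') := by
  have h1 : ap L (wk L (expMap L x' g')) (sb L x (vB L))
      = sb L g' (ap L (vA L) (sb L x' (sb L x (vB L)))) := by
    rw [expMap, betaWk, subst_sb, subst_ap, sb_vA, Fin.snoc_castSucc, subst_sb, sb_vB,
      Fin.snoc_last]
    rfl
  rw [expMap_mul, h1, sb_sb L x', sb_sb L g]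
  rfl

lemma expMap_idem (x z : L.carrier 1) (hx : x * x = x) (hz : z * z = z) :
    expMap L x z * expMap L x z = expMap L x z := by
  rw [expMap_comp, hx, hz]

/-- Currying: `λ y. λ b. v ⟨b, y⟩`. -/
def curE (v : L.carrier 1) : L.carrier 1 :=
  L.abs (sb L v (pairt L (vB L) (vA L)))

/-- Uncurrying: `λ p. z ((u (y (snd p))) (x (fst p)))`. -/
def uncE (x y z u : L.carrier 1) : L.carrier 1 :=
  z * ap L (u * (y * Sm L)) (x * Fm L)

lemma cur_mul (v t : L.carrier 1) :
    curE L v * t = L.abs (sb L v (pairt L (vB L) (wk L t))) := by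
  rw [curE, absB_mul, subst_sb, subst_pair, sb_vB, Fin.snoc_last, sb_vA, Fin.snoc_castSucc]

lemma sb_uncE (x y z u : L.carrier 1) {m : ℕ} (c : L.carrier m) :
    sb L (uncE L x y z u) c
      = sb L z (ap L (sb L u (sb L y (sb L (Sm L) c))) (sb L x (sb L (Fm L) c))) := by
  rw [uncE, sb_mul, sb_apt, sb_mul, sb_mul, sb_mul]

lemma absorb (x y z v : L.carrier 1) (hv : v = z * v * Pel L x y) {m : ℕ}
    (s t : L.carrier m) :
    sb L v (pairt L s t) = sb L z (sb L v (pairt L (sb L x s) (sb L y t))) := by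
  conv_lhs => rw [hv]
  rw [sb_mul, sb_mul, Pel, sb_pairt, sb_mul, sb_mul, sb_Fm_pair, sb_Sm_pair]

lemma curE_comm (x y z v : L.carrier 1) (hv : v = z * v * Pel L x y) :
    curE L v = expMap L x z * curE L v * y := by
  have h2 : expMap L x z * L.abs (sb L v (pairt L (vB L) (wk L y)))
      = L.abs (sb L z (sb L v (pairt L (sb L x (vB L)) (sb L y (vA L))))) := by
    rw [expMap_mul, betaWk, subst_sb, subst_pair, sb_vB, Fin.snoc_last, wk_snoc, ← wk,
      wk_eq_sb]
  rw [mul_assoc, cur_mul, h2, ← absorb L x y z v hv, curE]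

lemma uncE_comm (x y z u : L.carrier 1) (hx : x * x = x) (hy : y * y = y)
    (hz : z * z = z) : uncE L x y z u = z * uncE L x y z u * Pel L x y := by
  have hS : sb L (Sm L) (Pel L x y) = y * Sm L := by rw [Pel, sb_Sm_pair]
  have hF : sb L (Fm L) (Pel L x y) = x * Fm L := by rw [Pel, sb_Fm_pair]
  have hyy : sb L y (y * Sm L) = y * Sm L := by rw [← mulM, ← mul_assoc, hy]
  have hxx : sb L x (x * Fm L) = x * Fm L := by rw [← mulM, ← mul_assoc, hx]
  have h2 : uncE L x y z u * Pel L x y = uncE L x y z u := by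
    rw [mulM, sb_uncE, hS, hF, hyy, hxx, ← mulM, ← mulM, uncE]
  have h1 : z * uncE L x y z u = uncE L x y z u := by
    rw [uncE, ← mul_assoc, hz]
  rw [h1, h2]

lemma uncE_curE (x y z v : L.carrier 1) (hv : v = z * v * Pel L x y) :
    uncE L x y z (curE L v) = v := by
  rw [uncE, cur_mul, beta, subst_sb, subst_pair, sb_vB, Fin.snoc_last, wk_snoc, L.subst_pr,
    ← Pel, ← mulM, ← mul_assoc, ← hv]

lemma curE_uncE (x y z u : L.carrier 1) (hx : x * x = x) (hy : y * y = y)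
    (hz : z * z = z) (hu : u = expMap L x z * u * y) :
    curE L (uncE L x y z u) = u := by
  have huy : u * y = u := idm_absorb_right hu hy
  have h1 : curE L (uncE L x y z u) = expMap L x z * u := by
    rw [curE, sb_uncE, sb_Sm_pair, sb_Fm_pair, sb_sb, ← mulM, huy, ← wk_eq_sb,
      ← expMap_mul]
  rw [h1, idm_absorb_left hu (expMap_idem L x z hx hz)]

lemma nat_left (x y y' z g f : L.carrier 1) (hx : x * x = x) (hyf : y * f = f) :
    uncE L x y' z (g * f) = uncE L x y z g * pairt L (x * Fm L) (f * (y' * Sm L)) := by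
  have hy2 : sb L y (f * (y' * Sm L)) = f * (y' * Sm L) := by
    rw [← mulM, ← mul_assoc, hyf]
  have hx2 : sb L x (x * Fm L) = x * Fm L := by rw [← mulM, ← mul_assoc, hx]
  conv_rhs => rw [mulM L (uncE L x y z g), sb_uncE, sb_Sm_pair, sb_Fm_pair, hy2, hx2]
  conv_lhs => rw [uncE, mul_assoc g f]
  rfl

lemma nat_right (x y z' k v : L.carrier 1) (hx : x * x = x)
    (hw : k * v = z' * (k * v) * Pel L x y) :
    curE L (k * v) = expMap L x k * curE L v := by
  have h1 : ap L (wk L (curE L v)) (sb L x (vB L))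
      = sb L v (pairt L (sb L x (vB L)) (vA L)) := by
    rw [curE, betaWk, subst_sb, subst_pair, sb_vB, Fin.snoc_last, sb_vA, Fin.snoc_castSucc]
    rfl
  have h2 : expMap L x k * curE L v
      = L.abs (sb L (k * v) (pairt L (sb L x (vB L)) (vA L))) := by
    rw [expMap_mul, h1, sb_sb, ← mulM]
  have hxx : sb L x (sb L x (vB L)) = sb L x (vB L) := by rw [sb_sb, ← mulM, hx]
  conv_lhs => rw [curE, absorb L x y z' (k * v) hw]
  conv_rhs => rw [h2, absorb L x y z' (k * v) hw, hxx]

end ExpElems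

section ExpCat

variable (L : LambdaTheory)

/-- The exponential object. -/
def Robj (Xo Z : Karoubi (SingleObj (L.carrier 1))) : Karoubi (SingleObj (L.carrier 1)) :=
  mkObj L (expMap L (ip Xo) (ip Z)) (expMap_idem L _ _ (ip_idem Xo) (ip_idem Z))

lemma ip_Robj (Xo Z : Karoubi (SingleObj (L.carrier 1))) :
    ip (Robj L Xo Z) = expMap L (ip Xo) (ip Z) := rfl

/-- The exponential functor `Z ↦ Zᴷ`. -/
def Rfun (Xo : Karoubi (SingleObj (L.carrier 1))) :
    Karoubi (SingleObj (L.carrier 1)) ⥤ Karoubi (SingleObj (L.carrier 1)) where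
  obj Z := Robj L Xo Z
  map {Z Z'} k := mkHom (Robj L Xo Z) (Robj L Xo Z') (expMap L (ip Xo) (hf k)) (by
    rw [ip_Robj, ip_Robj, expMap_comp, expMap_comp, ip_idem, ip_idem, ← hf_comm k])
  map_id Z := by
    apply karoubi_hom_ext
    rw [hf_mkHom, hf_id, hf_id, ip_Robj]
  map_comp {Z Z' Z''} f g := by
    apply karoubi_hom_ext
    show expMap L (ip Xo) (hf (f ≫ g))
        = expMap L (ip Xo) (hf g) * expMap L (ip Xo) (hf f)
    rw [expMap_comp, ip_idem]
    rfl

lemma ip_tensor (Xo Yo : Karoubi (SingleObj (L.carrier 1))) :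
    ip (Xo ⊗ Yo) = Pel L (ip Xo) (ip Yo) := rfl

lemma hf_fst (Xo Yo : Karoubi (SingleObj (L.carrier 1))) :
    hf (CartesianMonoidalCategory.fst Xo Yo) = ip Xo * Fm L := rfl

lemma hf_snd (Xo Yo : Karoubi (SingleObj (L.carrier 1))) :
    hf (CartesianMonoidalCategory.snd Xo Yo) = ip Yo * Sm L := rfl

lemma whisker_hf (Xo : Karoubi (SingleObj (L.carrier 1)))
    {Y Y' : Karoubi (SingleObj (L.carrier 1))} (f : Y ⟶ Y') :
    hf (Xo ◁ f) = pairt L (ip Xo * Fm L) (hf f * (ip Y * Sm L)) := by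
  have h : Xo ◁ f = CartesianMonoidalCategory.lift (CartesianMonoidalCategory.fst Xo Y)
      (CartesianMonoidalCategory.snd Xo Y ≫ f) := by
    apply CartesianMonoidalCategory.hom_ext <;> simp
  rw [h]
  rfl

/-- The adjunction `(Xo ⊗ -) ⊣ (Xo ⇒ -)`. -/
def adjX (Xo : Karoubi (SingleObj (L.carrier 1))) :
    MonoidalCategory.tensorLeft Xo ⊣ Rfun L Xo :=
  Adjunction.mkOfHomEquiv
    { homEquiv := fun Y Z =>
        { toFun := fun v => mkHom Y (Robj L Xo Z) (curE L (hf v)) (by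
            have hv : hf v = ip Z * hf v * Pel L (ip Xo) (ip Y) := hf_comm v
            rw [ip_Robj]
            exact curE_comm L _ _ _ _ hv)
          invFun := fun u => mkHom (Xo ⊗ Y) Z (uncE L (ip Xo) (ip Y) (ip Z) (hf u)) (by
            rw [ip_tensor]
            exact uncE_comm L _ _ _ _ (ip_idem Xo) (ip_idem Y) (ip_idem Z))
          left_inv := fun v => by
            apply karoubi_hom_ext
            show uncE L (ip Xo) (ip Y) (ip Z) (curE L (hf v)) = hf v
            exact uncE_curE L _ _ _ _ (hf_comm v)
          right_inv := fun u => by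
            apply karoubi_hom_ext
            show curE L (uncE L (ip Xo) (ip Y) (ip Z) (hf u)) = hf u
            have hu : hf u = expMap L (ip Xo) (ip Z) * hf u * ip Y := hf_comm u
            exact curE_uncE L _ _ _ _ (ip_idem Xo) (ip_idem Y) (ip_idem Z) hu }
      homEquiv_naturality_left_symm := fun {Y' Y Z} f g => by
        apply karoubi_hom_ext
        show uncE L (ip Xo) (ip Y') (ip Z) (hf g * hf f)
            = uncE L (ip Xo) (ip Y) (ip Z) (hf g) * hf (Xo ◁ f)
        rw [whisker_hf]
        exact nat_left L (ip Xo) (ip Y) (ip Y') (ip Z) (hf g) (hf f)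
          (ip_idem Xo) (ip_mul_hf f)
      homEquiv_naturality_right := fun {Y Z Z'} v k => by
        apply karoubi_hom_ext
        show curE L (hf k * hf v) = expMap L (ip Xo) (hf k) * curE L (hf v)
        have hw : hf k * hf v = ip Z' * (hf k * hf v) * Pel L (ip Xo) (ip Y) :=
          hf_comm (v ≫ k)
        exact nat_right L (ip Xo) (ip Y) (ip Z') (hf k) (hf v) (ip_idem Xo) hw }

/-- The cartesian closed structure. -/
def CCC : MonoidalClosed (Karoubi (SingleObj (L.carrier 1))) :=
  { closed := fun Xo => { rightAdj := Rfun L Xo, adj := adjX L Xo } }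

end ExpCat

end KProof

/-- STATEMENT 13: the Karoubi envelope (Cauchy completion) of the one-object
category given by the monoid `ℒ(1)` of a λ-theory `ℒ` is cartesian closed. -/
theorem karoubi_cartesianClosed (L : LambdaTheory) :
    ∃ h : CartesianMonoidalCategory (Idempotents.Karoubi (SingleObj (L.carrier 1))),
      Nonempty (@MonoidalClosed (Idempotents.Karoubi (SingleObj (L.carrier 1))) _
        h.toMonoidalCategory) :=
  ⟨KProof.CFPinst L, ⟨KProof.CCC L⟩⟩
end

section
/- Let ℒ be a λ-theory and Mℒ the monoid with underlying set ℒ(1), multiplication t · s = t⟨s⟩ and unit pr_1. The functor from the category Pℒ of presheaves over ℒ to the category of right Mℒ-sets, sending a presheaf X to the set X(1) with right action x · t = x⟨t⟩ (for x ∈ X(1), t ∈ ℒ(1)) and a presheaf map to its component at 1, is an equivalence of categories. -/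
open CategoryTheory Limits

/-- The category `P T` of presheaves over an algebraic theory `T`. -/
instance presheafCategory (T : AlgTheory) : CategoryTheory.Category (ThPresheaf T) where
  Hom X Y := ThPresheafHom X Y
  id _ := { toFun := fun _ x => x, map_act := fun _ _ => rfl }
  comp f g := f.comp g
  id_comp _ := rfl
  comp_id _ := rfl
  assoc _ _ _ := rfl
namespace LambdaTheory
variable (L : LambdaTheory)

def ap {m : ℕ} (a b : L.carrier m) : L.carrier m := L.subst L.appOp ![a, b]

lemma subst_ap {m k : ℕ} (a b : L.carrier m) (r : Fin m → L.carrier k) :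
    L.subst (L.ap a b) r = L.ap (L.subst a r) (L.subst b r) := by
  unfold ap
  rw [L.subst_assoc]
  congr 1
  funext i
  fin_cases i <;> simp

lemma rho_eq_s12 {n : ℕ} (a : L.carrier n) :
    L.rho a = L.subst L.appOp (L.toAlgTheory.lift (fun _ : Fin 1 => a)) := by
  have h : a = L.subst (L.pr 0) (fun _ : Fin 1 => a) := by rw [L.pr_subst]
  conv_lhs => rw [h]
  rw [← L.rho_subst]
  rfl

lemma subst_rho {n m : ℕ} (a : L.carrier n) (s : Fin (n + 1) → L.carrier m) :
    L.subst (L.rho a) s = L.ap (L.subst a (fun i => s i.castSucc)) (s (Fin.last n)) := by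
  rw [rho_eq_s12, L.subst_assoc]
  unfold ap
  congr 1
  funext j
  match j with
  | 0 =>
    show L.subst (L.toAlgTheory.lift (fun _ : Fin 1 => a) (Fin.castSucc 0)) s = _
    rw [AlgTheory.lift]
    rw [Fin.lastCases_castSucc]
    show L.subst (L.subst a _) s = _
    rw [L.subst_assoc]
    congr 1
    funext i
    rw [L.pr_subst]
  | 1 =>
    show L.subst (L.toAlgTheory.lift (fun _ : Fin 1 => a) (Fin.last 1)) s = _
    rw [AlgTheory.lift, Fin.lastCases_last, L.pr_subst]
    simp

lemma subst_snoc {n m : ℕ} (u : L.carrier (n + 1)) (σ : Fin n → L.carrier m)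
    (t : L.carrier m) :
    L.subst u (Fin.snoc σ t) = L.ap (L.subst (L.abs u) σ) t := by
  conv_lhs => rw [← L.rho_abs u]
  rw [subst_rho]
  congr 1
  · congr 1
    funext i
    simp
  · simp

end LambdaTheory

namespace LambdaTheory
variable (L : LambdaTheory)

/-- Weakening of a closed term to any arity. -/
def cl {m : ℕ} (c : L.carrier 0) : L.carrier m := L.subst c Fin.elim0

lemma subst_cl {m k : ℕ} (c : L.carrier 0) (r : Fin m → L.carrier k) :
    L.subst (L.cl c) r = L.cl c := by
  unfold cl
  rw [L.subst_assoc]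
  congr 1
  funext i
  exact i.elim0

/-- The closed pairing combinator `λa b f. f a b`. -/
def pairC : L.carrier 0 :=
  L.abs (L.abs (L.abs (L.ap (L.ap (L.pr 2) (L.pr 0)) (L.pr 1))))

/-- The closed selector `λx₀ x₁. xᵢ`. -/
def kC (i : Fin 2) : L.carrier 0 := L.abs (L.abs (L.pr i))

/-- Pairing in any arity. -/
def pairTm {m : ℕ} (a b : L.carrier m) : L.carrier m := L.ap (L.ap (L.cl L.pairC) a) b

/-- Projection in any arity. -/
def projTm {m : ℕ} (i : Fin 2) (t : L.carrier m) : L.carrier m := L.ap t (L.cl (L.kC i))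

lemma ap_kC {m : ℕ} (i : Fin 2) (a b : L.carrier m) :
    L.ap (L.ap (L.cl (L.kC i)) a) b = ![a, b] i := by
  unfold cl kC
  rw [← L.subst_snoc, ← L.subst_snoc, L.pr_subst]
  match i with
  | 0 => rfl
  | 1 => rfl

lemma proj_pair {m : ℕ} (i : Fin 2) (a b : L.carrier m) :
    L.projTm i (L.pairTm a b) = ![a, b] i := by
  unfold projTm pairTm cl pairC
  rw [← L.subst_snoc, ← L.subst_snoc, ← L.subst_snoc]
  rw [L.subst_ap, L.subst_ap, L.pr_subst, L.pr_subst, L.pr_subst]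
  have e2 : (2 : Fin 3) = Fin.last 2 := rfl
  have e0 : (0 : Fin 3) = Fin.castSucc (Fin.castSucc (Fin.last 0)) := rfl
  have e1 : (1 : Fin 3) = Fin.castSucc (Fin.last 1) := rfl
  rw [e2, e0, e1]
  simp only [Fin.snoc_last, Fin.snoc_castSucc]
  exact L.ap_kC i a b

/-- The tupling term `uTm n ∈ ℒ(n)`: an encoding of the tuple of all variables. -/
def uTm : ∀ n : ℕ, L.carrier n
  | 0 => L.cl L.pairC
  | n + 1 => L.pairTm (L.rename Fin.castSucc (uTm n)) (L.pr (Fin.last n))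

/-- The projections `vTm n i ∈ ℒ(1)` extracting the `i`-th component. -/
def vTm : ∀ n : ℕ, Fin n → L.carrier 1
  | 0 => Fin.elim0
  | n + 1 => Fin.lastCases (L.projTm 1 (L.pr 0))
      (fun j => L.subst (vTm n j) (fun _ => L.projTm 0 (L.pr 0)))

lemma subst_projTm {m k : ℕ} (i : Fin 2) (t : L.carrier m) (r : Fin m → L.carrier k) :
    L.subst (L.projTm i t) r = L.projTm i (L.subst t r) := by
  unfold projTm
  rw [L.subst_ap, L.subst_cl]

lemma v_u (n : ℕ) (i : Fin n) : L.subst (L.vTm n i) (fun _ => L.uTm n) = L.pr i := by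
  induction n with
  | zero => exact i.elim0
  | succ n ih =>
    induction i using Fin.lastCases with
    | last =>
      simp only [vTm, Fin.lastCases_last]
      rw [subst_projTm, L.pr_subst]
      simp only [uTm]
      rw [L.proj_pair]
      rfl
    | cast j =>
      simp only [vTm, Fin.lastCases_castSucc]
      rw [L.subst_assoc]
      have h1 : (fun _ : Fin 1 => L.subst (L.projTm 0 (L.pr (0 : Fin 1))) (fun _ => L.uTm (n + 1)))
          = fun _ : Fin 1 => L.rename Fin.castSucc (L.uTm n) := by
        funext k
        rw [subst_projTm, L.pr_subst]
        simp only [uTm]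
        rw [L.proj_pair]
        rfl
      rw [h1]
      unfold AlgTheory.rename
      have h2 : L.subst (L.vTm n j) (fun _ : Fin 1 => L.subst (L.uTm n)
          (fun i => L.pr (Fin.castSucc i)))
          = L.subst (L.subst (L.vTm n j) (fun _ => L.uTm n)) (fun i => L.pr (Fin.castSucc i)) := by
        rw [L.subst_assoc]
      rw [h2, ih, L.pr_subst]

end LambdaTheory

/-- A right `M`-set: a set with an associative unital right action of the
monoid `M`. -/
structure RAct (M : Type) [Monoid M] where
  carrier : Type
  act : carrier → M → carrier
  act_one : ∀ x, act x 1 = x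
  act_mul : ∀ (x : carrier) (a b : M), act (act x a) b = act x (a * b)

/-- Equivariant maps of right `M`-sets. -/
structure RActHom {M : Type} [Monoid M] (X Y : RAct M) where
  toFun : X.carrier → Y.carrier
  map_act : ∀ (x : X.carrier) (a : M), toFun (X.act x a) = Y.act (toFun x) a

/-- The category of right `M`-sets. -/
instance ractCategory (M : Type) [Monoid M] : CategoryTheory.Category (RAct M) where
  Hom X Y := RActHom X Y
  id _ := { toFun := fun x => x, map_act := fun _ _ => rfl }
  comp f g :=
    { toFun := fun x => g.toFun (f.toFun x)
      map_act := fun x a => by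
        show g.toFun (f.toFun _) = _
        rw [f.map_act, g.map_act] }
  id_comp _ := rfl
  comp_id _ := rfl
  assoc _ _ _ := rfl

theorem fin_one_tuple {α : Type} (f : Fin 1 → α) : f = fun _ => f 0 := by
  funext i
  rw [Subsingleton.elim i 0]

/-- The functor from presheaves over `ℒ` to right `ℒ(1)`-sets sending `X` to
`X(1)` with the action by substitution, and a presheaf map to its component
at `1`. -/
def evalAtOne (L : LambdaTheory) : ThPresheaf L.toAlgTheory ⥤ RAct (L.carrier 1) where
  obj X :=
    { carrier := X.obj 1
      act := fun x t => X.act x fun _ => t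
      act_one := fun x => by
        show X.act x (fun _ => L.pr 0) = x
        have : (fun _ : Fin 1 => L.pr (0 : Fin 1)) = L.pr := by
          funext i
          rw [Subsingleton.elim i 0]
        rw [this, X.act_pr]
      act_mul := fun x a b => by
        show X.act (X.act x fun _ => a) (fun _ => b) = X.act x fun _ => a * b
        rw [X.act_subst]; rfl }
  map φ :=
    { toFun := φ.toFun 1
      map_act := fun x a => φ.map_act x fun _ => a }
  map_id _ := rfl
  map_comp _ _ := rfl

theorem RActHom.ext' {M : Type} [Monoid M] {X Y : RAct M} {f g : RActHom X Y}
    (h : ∀ x, f.toFun x = g.toFun x) : f = g := by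
  cases f; cases g; congr 1; funext x; exact h x

namespace LambdaTheory
variable (L : LambdaTheory)

lemma pr_fun_eq : (fun _ : Fin 1 => L.pr (0 : Fin 1)) = L.toAlgTheory.pr := by
  funext i
  rw [Subsingleton.elim i (0 : Fin 1)]

lemma v_u_fun (n : ℕ) :
    (fun i => L.subst (L.vTm n i) (fun _ => L.uTm n)) = L.toAlgTheory.pr := by
  funext i
  exact L.v_u n i

lemma act_v_u {X : ThPresheaf L.toAlgTheory} {n : ℕ} (x : X.obj n) :
    X.act (X.act x (L.vTm n)) (fun _ => L.uTm n) = x := by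
  rw [X.act_subst, L.v_u_fun, X.act_pr]

/-- The free right `ℒ(1)`-set on `n` generators: tuples of unary terms. -/
def freeR (n : ℕ) : RAct (L.carrier 1) where
  carrier := Fin n → L.carrier 1
  act s t := fun i => L.subst (s i) (fun _ => t)
  act_one s := by
    funext i
    show L.subst (s i) (fun _ => L.pr 0) = s i
    rw [L.pr_fun_eq, L.subst_pr]
  act_mul s a b := by
    funext i
    exact L.subst_assoc (s i) (fun _ => a) (fun _ => b)

/-- The inverse construction: the presheaf `n ↦ Hom_M(ℒ(1)ⁿ, A)`. -/
def GObj (A : RAct (L.carrier 1)) : ThPresheaf L.toAlgTheory where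
  obj n := RActHom (L.freeR n) A
  act {m n} φ s :=
    { toFun := fun r => φ.toFun (fun i => L.subst (s i) r)
      map_act := fun r t => by
        have h : (fun i => L.subst (s i) ((L.freeR n).act r t))
            = (L.freeR m).act (fun i => L.subst (s i) r) t := by
          funext i
          exact (L.subst_assoc (s i) r (fun _ => t)).symm
        show φ.toFun (fun i => L.subst (s i) ((L.freeR n).act r t)) = _
        rw [h]
        exact φ.map_act _ t }
  act_pr φ := by
    apply RActHom.ext'
    intro r
    show φ.toFun (fun i => L.subst (L.pr i) r) = φ.toFun r
    congr 1
    funext i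
    exact L.pr_subst i r
  act_subst φ s r := by
    apply RActHom.ext'
    intro q
    show φ.toFun (fun i => L.subst (s i) (fun j => L.subst (r j) q))
      = φ.toFun (fun i => L.subst (L.subst (s i) r) q)
    congr 1
    funext i
    exact (L.subst_assoc (s i) r q).symm

/-- The counit isomorphism `F (G A) ≅ A`. -/
def counitIso (A : RAct (L.carrier 1)) : (evalAtOne L).obj (L.GObj A) ≅ A where
  hom :=
    { toFun := fun φ => φ.toFun (fun _ => L.pr 0)
      map_act := fun φ t => by
        show φ.toFun (fun i => L.subst (t : L.carrier 1) (fun _ => L.pr 0))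
          = A.act (φ.toFun (fun _ => L.pr 0)) t
        have h1 : (fun _ : Fin 1 => L.subst t (fun _ => L.pr 0))
            = (L.freeR 1).act (fun _ => L.pr (0 : Fin 1)) t := by
          funext i
          show L.subst t (fun _ => L.pr 0) = L.subst (L.pr 0) (fun _ => t)
          rw [L.pr_fun_eq, L.subst_pr, L.pr_subst]
        rw [h1]
        exact φ.map_act _ t }
  inv :=
    { toFun := fun a =>
        { toFun := fun r => A.act a (r 0)
          map_act := fun r t => (A.act_mul a (r 0) t).symm }
      map_act := fun a t => by
        apply RActHom.ext'
        intro r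
        show A.act (A.act a t) (r 0) = A.act a (L.subst t r)
        rw [A.act_mul]
        show A.act a (L.subst t (fun _ => r 0)) = A.act a (L.subst t r)
        congr 1
        exact congrArg (L.subst t) (fin_one_tuple r).symm }
  hom_inv_id := by
    apply RActHom.ext'
    intro φ
    apply RActHom.ext'
    intro r
    show A.act (φ.toFun (fun _ => L.pr 0)) (r 0) = φ.toFun r
    erw [← φ.map_act]
    show φ.toFun (fun _ => L.subst (L.pr 0) (fun _ => r 0)) = φ.toFun r
    have : (fun _ : Fin 1 => L.subst (L.pr (0 : Fin 1)) (fun _ => r 0)) = r := by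
      funext i
      rw [L.pr_subst, Subsingleton.elim i (0 : Fin 1)]
    rw [this]
  inv_hom_id := by
    apply RActHom.ext'
    intro a
    exact A.act_one a

end LambdaTheory


/-- STATEMENT 14: the functor `X ↦ X(1)` from presheaves over a λ-theory `ℒ`
to right `ℒ(1)`-sets is an equivalence of categories. -/
theorem evalAtOne_isEquivalence (L : LambdaTheory) : (evalAtOne L).IsEquivalence := by
  refine { faithful := ?_, full := ?_, essSurj := ?_ }
  · constructor
    intro X Y φ ψ h
    have h1 : φ.toFun 1 = ψ.toFun 1 := congrArg RActHom.toFun h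
    apply ThPresheafHom.ext
    intro n x
    have hx := L.act_v_u (X := X) x
    calc φ.toFun n x = φ.toFun n (X.act (X.act x (L.vTm n)) (fun _ => L.uTm n)) := by rw [hx]
      _ = Y.act (φ.toFun 1 (X.act x (L.vTm n))) (fun _ => L.uTm n) := φ.map_act _ _
      _ = Y.act (ψ.toFun 1 (X.act x (L.vTm n))) (fun _ => L.uTm n) := by rw [h1]
      _ = ψ.toFun n (X.act (X.act x (L.vTm n)) (fun _ => L.uTm n)) := (ψ.map_act _ _).symm
      _ = ψ.toFun n x := by rw [hx]
  · constructor
    intro X Y g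
    refine ⟨{ toFun := fun n x => Y.act (g.toFun (X.act x (L.vTm n))) (fun _ => L.uTm n)
              map_act := ?_ }, ?_⟩
    · intro m n x s
      show Y.act (g.toFun (X.act (X.act x s) (L.vTm n))) (fun _ => L.uTm n)
        = Y.act (Y.act (g.toFun (X.act x (L.vTm m))) (fun _ => L.uTm m)) s
      have hw : X.act (X.act x s) (L.vTm n) = X.act x (fun i => L.subst (s i) (L.vTm n)) :=
        X.act_subst x s (L.vTm n)
      have h2 : X.act x (fun i => L.subst (s i) (L.vTm n))
          = X.act (X.act x (L.vTm m))
              (fun _ : Fin 1 => L.subst (L.uTm m) (fun i => L.subst (s i) (L.vTm n))) := by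
        rw [X.act_subst]
        congr 1
        funext i
        have h3 := L.subst_assoc (L.vTm m i) (fun _ => L.uTm m)
          (fun i => L.subst (s i) (L.vTm n))
        rw [L.v_u, L.pr_subst] at h3
        exact h3
      have h4 : g.toFun (X.act (X.act x (L.vTm m))
              (fun _ : Fin 1 => L.subst (L.uTm m) (fun i => L.subst (s i) (L.vTm n))))
          = Y.act (g.toFun (X.act x (L.vTm m)))
              (fun _ : Fin 1 => L.subst (L.uTm m) (fun i => L.subst (s i) (L.vTm n))) :=
        g.map_act (X.act x (L.vTm m)) _
      erw [hw, h2, h4, Y.act_subst, Y.act_subst]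
      congr 1
      funext k
      show L.subst (L.subst (L.uTm m) fun i => L.subst (s i) (L.vTm n)) (fun _ => L.uTm n)
        = L.subst (L.uTm m) s
      rw [L.subst_assoc]
      congr 1
      funext i
      rw [L.subst_assoc, L.v_u_fun, L.subst_pr]
    · apply RActHom.ext'
      intro x
      show Y.act (g.toFun (X.act x (L.vTm 1))) (fun _ => L.uTm 1) = g.toFun x
      have h5 : X.act x (L.vTm 1) = X.act x (fun _ => L.vTm 1 0) := by
        rw [← fin_one_tuple]
      have h7 : g.toFun (X.act x (fun _ => L.vTm 1 0)) = Y.act (g.toFun x) (fun _ => L.vTm 1 0) :=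
        g.map_act x (L.vTm 1 0)
      erw [h5, h7, Y.act_subst]
      have h6 : (fun k : Fin 1 => L.subst (L.vTm 1 0) (fun _ => L.uTm 1))
          = L.toAlgTheory.pr := by
        funext k
        rw [L.v_u 1 0, Subsingleton.elim (0 : Fin 1) k]
      erw [h6, Y.act_pr]
  · constructor
    intro A
    exact ⟨L.GObj A, ⟨L.counitIso A⟩⟩
end
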